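/- In the CMBS setting, let m ≤ n, let J : X → ℝ^{m×n} be continuous at x₀, and suppose that for every x ∈ X and every i ∈ {1,…,m} the i-th row of J(x), viewed as a vector of ℝ^n, lies in the linear span of {ĵ₁(x),…,ĵ_i(x)}. Let a ∈ {1,…,m} and let S be a CMBS at x₀. Then the function x ↦ J_{1:a}(x)·P_{S∩{1,…,a}}(x) is continuous at x₀, where J_{1:a}(x) ∈ ℝ^{a×n} denotes the submatrix consisting of the first a rows of J(x). -/

import Mathlib

open Matrix

/-- `P_S(x) = ∑_{i ∈ S} ĵ_i(x) ĵ_i(x)ᵀ`, the projector-valued function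
associated with a subset `S` of the pointwise orthonormal frame `ĵ`. -/
def projSum {X : Type*} {n : ℕ} (j : Fin n → X → (Fin n → ℝ))
    (S : Finset (Fin n)) (x : X) : Matrix (Fin n) (Fin n) ℝ :=
  ∑ i ∈ S, vecMulVec (j i x) (j i x)

/-- `S` is a continuous minimum basis subset (CMBS) at `x₀`: `S` is nonempty, `P_S` is
continuous at `x₀`, and no nonempty proper subset `T ⊊ S` has `P_T` continuous at `x₀`. -/
def IsCMBS {X : Type*} [TopologicalSpace X] {n : ℕ}
    (j : Fin n → X → (Fin n → ℝ)) (x₀ : X) (S : Finset (Fin n)) : Prop :=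
  S.Nonempty ∧ ContinuousAt (projSum j S) x₀ ∧
    ∀ T : Finset (Fin n), T.Nonempty → T ⊂ S → ¬ ContinuousAt (projSum j T) x₀

/-- If `J` is continuous at `x₀`, each `i`-th row of `J x` lies in the span of the first
`i` frame vectors, and `S` is a CMBS at `x₀`, then `x ↦ J_{1:a}(x) P_{S ∩ {1,…,a}}(x)`
is continuous at `x₀` (0-indexed: the first `a` rows and indices `k < a`). -/
theorem cmbs_submatrix_proj_continuousAt
    {X : Type*} [NormedAddCommGroup X] [NormedSpace ℝ X]
    {n : ℕ} (j : Fin n → X → (Fin n → ℝ)) (x₀ : X)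
    (horth : ∀ x, ∀ i k : Fin n, j i x ⬝ᵥ j k x = if i = k then 1 else 0)
    (m : ℕ) (hmn : m ≤ n)
    (J : X → Matrix (Fin m) (Fin n) ℝ) (hJ : ContinuousAt J x₀)
    (hrow : ∀ (x : X) (i : Fin m),
      J x i ∈ Submodule.span ℝ ((fun k : Fin n => j k x) ''
        {k : Fin n | (k : ℕ) ≤ (i : ℕ)}))
    (a : ℕ) (ha : 1 ≤ a) (ham : a ≤ m)
    (S : Finset (Fin n)) (hS : IsCMBS j x₀ S) :
    ContinuousAt (fun x =>
      (J x).submatrix (Fin.castLE ham) id *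
        projSum j (S.filter fun k => (k : ℕ) < a) x) x₀ := by
  -- rows of the submatrix are orthogonal to j k x for k ≥ a
  have hdot : ∀ (x : X) (i : Fin m) (k : Fin n), (i : ℕ) < (k : ℕ) →
      J x i ⬝ᵥ j k x = 0 := by
    intro x i k hik
    refine Submodule.span_induction (p := fun v _ => v ⬝ᵥ j k x = 0) ?_ ?_ ?_ ?_ (hrow x i)
    · rintro v ⟨l, hl, rfl⟩
      have hlk : l ≠ k := by
        intro h; subst h; exact absurd (lt_of_le_of_lt hl hik) (lt_irrefl _)
      simp [horth x l k, hlk]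
    · simp
    · intro u v _ _ hu hv; simp [add_dotProduct, hu, hv]
    · intro c v _ hv; simp [smul_dotProduct, hv]
  have key : ∀ x, (J x).submatrix (Fin.castLE ham) id *
      projSum j (S.filter fun k => (k : ℕ) < a) x =
      (J x).submatrix (Fin.castLE ham) id * projSum j S x := by
    intro x
    have hsplit : projSum j (S.filter fun k => (k : ℕ) < a) x +
        projSum j (S.filter fun k => ¬ (k : ℕ) < a) x = projSum j S x := by
      exact Finset.sum_filter_add_sum_filter_not S _ _
    rw [← hsplit, Matrix.mul_add]
    have hz : (J x).submatrix (Fin.castLE ham) id *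
        projSum j (S.filter fun k => ¬ (k : ℕ) < a) x = 0 := by
      rw [projSum, Matrix.mul_sum]
      refine Finset.sum_eq_zero ?_
      intro k hk
      have hak : a ≤ (k : ℕ) := by
        simpa using (Finset.mem_filter.mp hk).2
      ext p q
      have hpk : ((Fin.castLE ham p : Fin m) : ℕ) < (k : ℕ) :=
        lt_of_lt_of_le p.isLt hak
      have h0 := hdot x (Fin.castLE ham p) k hpk
      simp only [Matrix.mul_apply, Matrix.submatrix_apply, Matrix.vecMulVec_apply,
        id, Matrix.zero_apply]
      calc ∑ l, J x (Fin.castLE ham p) l * (j k x l * j k x q)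
          = (∑ l, J x (Fin.castLE ham p) l * j k x l) * j k x q := by
            rw [Finset.sum_mul]; congr 1; ext l; ring
        _ = 0 := by rw [show (∑ l, J x (Fin.castLE ham p) l * j k x l) =
              J x (Fin.castLE ham p) ⬝ᵥ j k x from rfl, h0, zero_mul]
    rw [hz, add_zero]
  have hsub : ContinuousAt (fun x => (J x).submatrix (Fin.castLE ham) id) x₀ := by
    exact (Continuous.matrix_submatrix continuous_id _ _).continuousAt.comp hJ
  have hmul : Continuous fun p : Matrix (Fin a) (Fin n) ℝ × Matrix (Fin n) (Fin n) ℝ =>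
      p.1 * p.2 := Continuous.matrix_mul continuous_fst continuous_snd
  have hcont : ContinuousAt (fun x =>
      (J x).submatrix (Fin.castLE ham) id * projSum j S x) x₀ :=
    hmul.continuousAt.comp (f := fun x => ((J x).submatrix (Fin.castLE ham) id, projSum j S x))
      (ContinuousAt.prodMk hsub hS.2.1)
  exact hcont.congr (Filter.Eventually.of_forall fun x => (key x).symm)
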